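/- arXiv:1811.06793 — 4 statements merged into one kernel-verified Lean document; each statement's English description precedes it below -/
import Mathlib

section
/- Let X be a discrete random variable taking values a₁, …, a_d with probabilities p₁, …, p_d, all p_j > 0, d ≥ 2. Set b_j = a_j − a₁ and d(s) = max_{j ∈ {2,…,d}} dist(b_j s, 2πℤ). Then there exists a constant c > 0, depending only on p₁, …, p_d, such that |E[e^{isX}]| ≤ 1 − c · d(s)² for all s ∈ ℝ. -/
open Real

lemma exp_I_mul_norm (x : ℝ) : ‖Complex.exp (Complex.I * x)‖ = 1 := by
  rw [mul_comm]
  exact Complex.norm_exp_ofReal_mul_I x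

lemma key_bound (P Q θ : ℝ) (hP : 0 < P) (hQ : 0 < Q) :
    ‖(P : ℂ) + Q * Complex.exp (Complex.I * θ)‖ ≤
      (P + Q) - (2 * P * Q / (Real.pi ^ 2 * (P + Q))) *
        (θ - 2 * Real.pi * (round (θ / (2 * Real.pi)) : ℝ)) ^ 2 := by
  have hπ := Real.pi_pos
  set n : ℤ := round (θ / (2 * Real.pi)) with hn
  set δ : ℝ := θ - 2 * Real.pi * n with hδ
  have hδπ : |δ| ≤ Real.pi := by
    have h := abs_sub_round (θ / (2 * Real.pi))
    have hrw : δ = (θ / (2 * Real.pi) - n) * (2 * Real.pi) := by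
      field_simp [hδ]
      exact hδ
    rw [hrw, abs_mul, abs_of_pos (by positivity : (0:ℝ) < 2 * Real.pi)]
    nlinarith [abs_nonneg (θ / (2 * Real.pi) - (n : ℝ))]
  have hδsq : δ ^ 2 ≤ Real.pi ^ 2 := by
    nlinarith [abs_nonneg δ, sq_abs δ]
  have hcos : Real.cos θ = Real.cos δ := by
    rw [hδ]
    have : θ - 2 * Real.pi * n = θ - n * (2 * Real.pi) := by ring
    rw [this, Real.cos_sub_int_mul_two_pi]
  have hcosb : Real.cos θ ≤ 1 - 2 / Real.pi ^ 2 * δ ^ 2 := by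
    rw [hcos]; exact Real.cos_le_one_sub_mul_cos_sq hδπ
  have hz : (P : ℂ) + Q * Complex.exp (Complex.I * θ) =
      Complex.ofReal (P + Q * Real.cos θ) + Complex.ofReal (Q * Real.sin θ) * Complex.I := by
    rw [mul_comm Complex.I, Complex.exp_mul_I, ← Complex.ofReal_cos, ← Complex.ofReal_sin]
    push_cast; ring
  rw [hz, Complex.norm_add_mul_I]
  set E : ℝ := 2 * P * Q / (Real.pi ^ 2 * (P + Q)) * δ ^ 2 with hE
  have hEnn : 0 ≤ E := by positivity
  have hEle : E ≤ (P + Q) / 2 := by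
    rw [hE, div_mul_eq_mul_div, div_le_div_iff₀ (by positivity) (by norm_num)]
    nlinarith [mul_nonneg (mul_nonneg hP.le hQ.le) (sub_nonneg.2 hδsq),
      mul_nonneg (sq_nonneg Real.pi) (sq_nonneg (P - Q))]
  have hX : (P + Q * Real.cos θ) ^ 2 + (Q * Real.sin θ) ^ 2 ≤ ((P + Q) - E) ^ 2 := by
    have hpy : Real.sin θ ^ 2 + Real.cos θ ^ 2 = 1 := Real.sin_sq_add_cos_sq θ
    have h2AE : 2 * (P + Q) * E = 4 * P * Q / Real.pi ^ 2 * δ ^ 2 := by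
      rw [hE]; field_simp; ring
    have hXle : (P + Q * Real.cos θ) ^ 2 + (Q * Real.sin θ) ^ 2 ≤
        (P + Q) ^ 2 - 2 * (P + Q) * E := by
      rw [h2AE]
      have h1 : 2 / Real.pi ^ 2 * δ ^ 2 * (2 * P * Q) ≤ (1 - Real.cos θ) * (2 * P * Q) :=
        mul_le_mul_of_nonneg_right (by linarith) (by positivity)
      have h2 : Q ^ 2 * Real.cos θ ^ 2 + Q ^ 2 * Real.sin θ ^ 2 = Q ^ 2 := by
        linear_combination Q ^ 2 * hpy
      have h4 : 2 / Real.pi ^ 2 * δ ^ 2 * (2 * P * Q) = 4 * P * Q / Real.pi ^ 2 * δ ^ 2 := by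
        ring
      nlinarith [h1, h2, h4]
    linarith [sq_nonneg E]
  calc Real.sqrt ((P + Q * Real.cos θ) ^ 2 + (Q * Real.sin θ) ^ 2)
      ≤ Real.sqrt (((P + Q) - E) ^ 2) := Real.sqrt_le_sqrt hX
    _ = (P + Q) - E := Real.sqrt_sq (by linarith)

/-- for a discrete random variable with `d ≥ 2` atoms `a j` of positive
probabilities `p j`, with `b j = a j - a 0` and
`D s = max_{j ≠ 0} dist(b j * s, 2πℤ)`, there is `c > 0` (depending only on the
probabilities) with `|E e^{isX}| ≤ 1 - c * D(s)²` for all `s`. -/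
theorem stmt4 (d : ℕ) (a : Fin (d + 2) → ℝ) (p : Fin (d + 2) → ℝ)
    (hp : ∀ j, 0 < p j) (hsum : ∑ j, p j = 1) :
    ∃ c > 0, ∀ s : ℝ,
      ‖∑ j, (p j : ℂ) * Complex.exp (Complex.I * ((a j * s : ℝ) : ℂ))‖ ≤
        1 - c * (⨆ j : {j : Fin (d + 2) // j ≠ 0},
            |(a j.1 - a 0) * s -
              2 * Real.pi * (round ((a j.1 - a 0) * s / (2 * Real.pi)) : ℝ)|) ^ 2 := by
  have hπ := Real.pi_pos
  haveI : Nonempty {j : Fin (d + 2) // j ≠ 0} :=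
    ⟨⟨⟨1, by omega⟩, by simp [Fin.ext_iff]⟩⟩
  set g : Fin (d + 2) → ℝ := fun j => 2 * p 0 * p j / (Real.pi ^ 2 * (p 0 + p j)) with hg
  obtain ⟨t0⟩ : Nonempty {j : Fin (d + 2) // j ≠ 0} := inferInstance
  set c : ℝ := Finset.inf' Finset.univ Finset.univ_nonempty
      (fun j : {j : Fin (d + 2) // j ≠ 0} => g j.1) with hc
  have hcpos : 0 < c := by
    rw [hc, Finset.lt_inf'_iff]
    intro j _
    have h0 := hp 0
    have hj := hp j.1
    positivity
  refine ⟨c, hcpos, fun s => ?_⟩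
  set f : {j : Fin (d + 2) // j ≠ 0} → ℝ := fun j =>
    |(a j.1 - a 0) * s - 2 * Real.pi * (round ((a j.1 - a 0) * s / (2 * Real.pi)) : ℝ)|
    with hf
  obtain ⟨K, hK⟩ : ∃ K, f K = ⨆ j, f j := exists_eq_ciSup_of_finite
  rw [← hK]
  -- factor out e^{i a 0 s}
  set F : Fin (d + 2) → ℂ := fun j =>
    (p j : ℂ) * Complex.exp (Complex.I * (((a j - a 0) * s : ℝ) : ℂ)) with hF
  have hfactor : ∑ j, (p j : ℂ) * Complex.exp (Complex.I * ((a j * s : ℝ) : ℂ)) =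
      Complex.exp (Complex.I * ((a 0 * s : ℝ) : ℂ)) * ∑ j, F j := by
    rw [Finset.mul_sum]
    refine Finset.sum_congr rfl fun j _ => ?_
    have harg : Complex.I * ((a j * s : ℝ) : ℂ) =
        Complex.I * ((a 0 * s : ℝ) : ℂ) + Complex.I * (((a j - a 0) * s : ℝ) : ℂ) := by
      push_cast; ring
    rw [hF, harg, Complex.exp_add]; ring
  rw [hfactor, norm_mul, exp_I_mul_norm, one_mul]
  -- split the sum
  have hK0 : (0 : Fin (d + 2)) ≠ K.1 := Ne.symm K.2
  have hsub : ({0, K.1} : Finset (Fin (d + 2))) ⊆ Finset.univ := Finset.subset_univ _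
  have hsplit : ∑ j, F j = (∑ j ∈ Finset.univ \ {0, K.1}, F j) + (F 0 + F K.1) := by
    rw [← Finset.sum_pair hK0, Finset.sum_sdiff hsub]
  have hpsplit : ∑ j ∈ Finset.univ \ {0, K.1}, p j = 1 - (p 0 + p K.1) := by
    have := Finset.sum_sdiff (f := p) hsub
    rw [Finset.sum_pair hK0] at this
    linarith [hsum ▸ this]
  have hF0 : F 0 = (p 0 : ℂ) := by
    rw [hF]
    simp
  have hrest : ‖∑ j ∈ Finset.univ \ {0, K.1}, F j‖ ≤ 1 - (p 0 + p K.1) := by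
    rw [← hpsplit]
    refine (norm_sum_le _ _).trans (le_of_eq ?_)
    refine Finset.sum_congr rfl fun j _ => ?_
    rw [hF, norm_mul, exp_I_mul_norm, mul_one, Complex.norm_real,
      Real.norm_eq_abs, abs_of_pos (hp j)]
  have hpair : ‖F 0 + F K.1‖ ≤ (p 0 + p K.1) - g K.1 * (f K) ^ 2 := by
    rw [hF0, hF]
    have := key_bound (p 0) (p K.1) ((a K.1 - a 0) * s) (hp 0) (hp K.1)
    rw [hf]
    rw [sq_abs]
    exact this
  have hgK : c ≤ g K.1 := Finset.inf'_le _ (Finset.mem_univ K)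
  have hfKsq : 0 ≤ (f K) ^ 2 := sq_nonneg _
  calc ‖∑ j, F j‖ ≤ ‖∑ j ∈ Finset.univ \ {0, K.1}, F j‖ + ‖F 0 + F K.1‖ := by
        rw [hsplit]; exact norm_add_le _ _
    _ ≤ (1 - (p 0 + p K.1)) + ((p 0 + p K.1) - g K.1 * (f K) ^ 2) := by
        exact add_le_add hrest hpair
    _ ≤ 1 - c * (f K) ^ 2 := by
        nlinarith [mul_le_mul_of_nonneg_right hgK hfKsq]
end

section
/- Let f : ℝ → ℝ be continuously differentiable with f, f', and x·f(x) integrable, and f' (left) exponential of order α. Fix 0 < θ < α. Then the functions e^{−θx} f(x), (e^{−θx} f(x))', and x e^{−θx} f(x) are all absolutely integrable on ℝ. -/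
open MeasureTheory Filter Set

private lemma exp_mul_integrableOn_Iic {b : ℝ} (hb : 0 < b) (c : ℝ) :
    IntegrableOn (fun x : ℝ => Real.exp (b * x)) (Iic c) := by
  have h := exp_neg_integrableOn_Ioi (-c) hb
  have h2 := (MeasurePreserving.integrableOn_comp_preimage
      (Measure.measurePreserving_neg (volume : Measure ℝ))
      (Homeomorph.neg ℝ).measurableEmbedding).2 h
  have hset : (Neg.neg ⁻¹' (Ioi (-c)) : Set ℝ) = Iio c := by
    ext x; simp [neg_lt]
  rw [hset] at h2
  rw [integrableOn_Iic_iff_integrableOn_Iio]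
  refine h2.congr_fun (fun x _ => ?_) measurableSet_Iio
  simp [Function.comp]

private lemma integral_exp_mul_Iic' {b : ℝ} (hb : 0 < b) (x : ℝ) :
    ∫ t in Iic x, Real.exp (b * t) = Real.exp (b * x) / b := by
  have hd : ∀ t ∈ Iio x, HasDerivAt (fun t => Real.exp (b * t) / b) (Real.exp (b * t)) t := by
    intro t _
    have : HasDerivAt (fun t : ℝ => Real.exp (b * t)) (Real.exp (b * t) * b) t := by
      simpa [mul_comm] using (((hasDerivAt_id t).const_mul b).exp)
    simpa [mul_div_assoc, mul_div_cancel_right₀ _ hb.ne'] using this.div_const b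
  have hlim : Tendsto (fun t => Real.exp (b * t) / b) atBot (nhds 0) := by
    have : Tendsto (fun t : ℝ => b * t) atBot atBot :=
      tendsto_id.const_mul_atBot hb
    simpa using ((Real.tendsto_exp_atBot.comp this).div_const b)
  have := integral_Iic_of_hasDerivAt_of_tendsto
    (Continuous.continuousWithinAt (by fun_prop : Continuous fun t : ℝ => Real.exp (b * t) / b)) hd (exp_mul_integrableOn_Iic hb x) hlim
  simpa using this

private lemma key {θ β c C : ℝ} (hθ : 0 < θ) (hβ : θ < β) (g : ℝ → ℝ)
    (hg : Integrable g) (hbd : ∀ x ≤ c, |g x| ≤ C * Real.exp (β * x)) :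
    Integrable (fun x => Real.exp (-θ * x) * g x) := by
  have hmeas : AEStronglyMeasurable (fun x => Real.exp (-θ * x) * g x) volume :=
    ((Real.continuous_exp.comp (continuous_const.mul continuous_id)).aestronglyMeasurable).mul
      hg.aestronglyMeasurable
  have hIic : IntegrableOn (fun x => Real.exp (-θ * x) * g x) (Iic c) := by
    refine Integrable.mono ((exp_mul_integrableOn_Iic (sub_pos.2 hβ) c).const_mul C)
      hmeas.restrict ?_
    refine (ae_restrict_iff' measurableSet_Iic).2 (Eventually.of_forall fun x hx => ?_)
    have h1 : |g x| ≤ C * Real.exp (β * x) := hbd x hx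
    have h2 : (0:ℝ) < Real.exp (-θ * x) := Real.exp_pos _
    have : ‖Real.exp (-θ * x) * g x‖ ≤ Real.exp (-θ * x) * (C * Real.exp (β * x)) := by
      rw [norm_mul, Real.norm_eq_abs, Real.norm_eq_abs, abs_of_pos h2]
      exact mul_le_mul_of_nonneg_left h1 h2.le
    refine this.trans ?_
    have heq : Real.exp (-θ * x) * (C * Real.exp (β * x)) = C * Real.exp ((β - θ) * x) := by
      rw [mul_comm (Real.exp (-θ * x)), mul_assoc, ← Real.exp_add]; ring_nf
    rw [heq, Real.norm_eq_abs]
    exact le_abs_self _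
  have hIoi : IntegrableOn (fun x => Real.exp (-θ * x) * g x) (Ioi c) := by
    refine Integrable.mono ((hg.norm.const_mul (Real.exp (-θ * c))).integrableOn)
      hmeas.restrict ?_
    refine (ae_restrict_iff' measurableSet_Ioi).2 (Eventually.of_forall fun x hx => ?_)
    have h2 : Real.exp (-θ * x) ≤ Real.exp (-θ * c) := by
      apply Real.exp_le_exp.2
      nlinarith [le_of_lt (mem_Ioi.1 hx)]
    simp only [Real.norm_eq_abs, abs_mul, abs_abs, abs_of_pos (Real.exp_pos (-θ * x)),
      abs_of_pos (Real.exp_pos (-θ * c))]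
    exact mul_le_mul_of_nonneg_right h2 (abs_nonneg _)
  have := hIic.union hIoi
  rw [Iic_union_Ioi] at this
  exact integrableOn_univ.1 this

private lemma mul_exp_le {δ x : ℝ} (hδ : 0 < δ) (hx : x ≤ 0) :
    |x| * Real.exp (δ * x) ≤ 1 / δ := by
  have h1 : δ * (-x) ≤ Real.exp (δ * (-x)) := by
    have := Real.add_one_le_exp (δ * (-x)); linarith
  have h2 : (0:ℝ) < Real.exp (δ * (-x)) := Real.exp_pos _
  have h3 : Real.exp (δ * x) = (Real.exp (δ * (-x)))⁻¹ := by
    rw [← Real.exp_neg]; ring_nf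
  rw [abs_of_nonpos hx, h3, ← div_eq_mul_inv, div_le_div_iff₀ h2 hδ]
  linarith

/-- if `f` is `C¹` with `f`, `f'`, `x·f(x)` integrable and `f'`
(left) exponential of order `α`, then for `0 < θ < α` the functions
`e^{-θx} f`, `(e^{-θx} f)'` and `x e^{-θx} f` are integrable. -/
theorem stmt8 (f : ℝ → ℝ) (α θ : ℝ) (hθ : 0 < θ) (hθα : θ < α)
    (hf : ContDiff ℝ 1 f)
    (hfint : Integrable f) (hf'int : Integrable (deriv f))
    (hxf : Integrable (fun x => x * f x))
    (hexp : Tendsto (fun x => Real.exp (-α * x) * deriv f x) atBot (nhds 0)) :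
    Integrable (fun x => Real.exp (-θ * x) * f x) ∧
    Integrable (deriv fun x => Real.exp (-θ * x) * f x) ∧
    Integrable (fun x => x * (Real.exp (-θ * x) * f x)) := by
  have hα : 0 < α := hθ.trans hθα
  have hdiff : Differentiable ℝ f := hf.differentiable one_ne_zero
  -- bound on deriv f near -∞
  have h1 := Metric.tendsto_nhds.mp hexp 1 one_pos
  obtain ⟨c₀, hc₀⟩ := eventually_atBot.1 h1
  have hbd' : ∀ x ≤ c₀, |deriv f x| ≤ Real.exp (α * x) := by
    intro x hx
    have h := hc₀ x hx
    rw [Real.dist_eq, sub_zero] at h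
    replace h := h.le
    have he : (0:ℝ) < Real.exp (-α * x) := Real.exp_pos _
    rw [abs_mul, abs_of_pos he] at h
    have : Real.exp (-α * x) * Real.exp (α * x) = 1 := by
      rw [← Real.exp_add]; ring_nf; exact Real.exp_zero
    nlinarith [abs_nonneg (deriv f x)]
  -- f tends to 0 at -∞
  have hlim : Tendsto f atBot (nhds 0) :=
    tendsto_zero_of_hasDerivAt_of_integrableOn_Iic (a := 0)
      (fun x _ => (hdiff x).hasDerivAt) hf'int.integrableOn hfint.integrableOn
  -- bound on f near -∞
  have hbf : ∀ x ≤ c₀, |f x| ≤ (1 / α) * Real.exp (α * x) := by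
    intro x hx
    have e1 : ∫ t in Iic x, deriv f t = f x := by
      have := integral_Iic_of_hasDerivAt_of_tendsto (a := x)
        (hf.continuous.continuousWithinAt)
        (fun t _ => (hdiff t).hasDerivAt) hf'int.integrableOn hlim
      simpa using this
    calc |f x| = ‖∫ t in Iic x, deriv f t‖ := by rw [e1, Real.norm_eq_abs]
      _ ≤ ∫ t in Iic x, ‖deriv f t‖ := norm_integral_le_integral_norm _
      _ ≤ ∫ t in Iic x, Real.exp (α * t) := by
          refine setIntegral_mono_on hf'int.norm.integrableOn
            (exp_mul_integrableOn_Iic hα x) measurableSet_Iic (fun t ht => ?_)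
          exact hbd' t (le_trans ht hx)
      _ = Real.exp (α * x) / α := integral_exp_mul_Iic' hα x
      _ = (1 / α) * Real.exp (α * x) := by ring
  have part1 : Integrable (fun x => Real.exp (-θ * x) * f x) :=
    key hθ hθα f hfint hbf
  have part3 : Integrable (fun x => x * (Real.exp (-θ * x) * f x)) := by
    set β := (θ + α) / 2 with hβdef
    have hβ : θ < β := by simp [hβdef]; linarith
    have hβα : β < α := by simp [hβdef]; linarith
    have hδ : (0:ℝ) < α - β := by linarith
    have hbd2 : ∀ x ≤ min c₀ 0, |x * f x| ≤ (1 / α) * (1 / (α - β)) * Real.exp (β * x) := by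
      intro x hx
      have hx0 : x ≤ 0 := hx.trans (min_le_right _ _)
      have hxc : x ≤ c₀ := hx.trans (min_le_left _ _)
      have h1 : |x * f x| ≤ |x| * ((1 / α) * Real.exp (α * x)) := by
        rw [abs_mul]
        exact mul_le_mul_of_nonneg_left (hbf x hxc) (abs_nonneg _)
      have h2 : |x| * Real.exp ((α - β) * x) ≤ 1 / (α - β) := mul_exp_le hδ hx0
      have heq : Real.exp (α * x) = Real.exp ((α - β) * x) * Real.exp (β * x) := by
        rw [← Real.exp_add]; ring_nf
      calc |x * f x| ≤ |x| * ((1 / α) * Real.exp (α * x)) := h1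
        _ = (1 / α) * ((|x| * Real.exp ((α - β) * x)) * Real.exp (β * x)) := by
            rw [heq]; ring
        _ ≤ (1 / α) * ((1 / (α - β)) * Real.exp (β * x)) := by
            have := mul_le_mul_of_nonneg_right h2 (Real.exp_pos (β * x)).le
            have hα' : (0:ℝ) ≤ 1 / α := by positivity
            nlinarith
        _ = (1 / α) * (1 / (α - β)) * Real.exp (β * x) := by ring
    have := key hθ hβ (fun x => x * f x) hxf hbd2
    exact this.congr (Eventually.of_forall fun x => by ring)
  refine ⟨part1, ?_, part3⟩
  have hderiv_eq : (deriv fun x => Real.exp (-θ * x) * f x)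
      = fun x => (-θ) * (Real.exp (-θ * x) * f x) + Real.exp (-θ * x) * deriv f x := by
    funext x
    have h1 : HasDerivAt (fun x : ℝ => Real.exp (-θ * x)) (-θ * Real.exp (-θ * x)) x := by
      simpa [mul_comm] using ((hasDerivAt_id x).const_mul (-θ)).exp
    have h2 := (hdiff x).hasDerivAt
    have h3 : HasDerivAt (fun x => Real.exp (-θ * x) * f x) _ x := h1.mul h2
    rw [h3.deriv]; ring
  rw [hderiv_eq]
  refine Integrable.add (part1.const_mul (-θ)) ?_
  exact key (C := 1) hθ hθα (deriv f) hf'int (fun x hx => by rw [one_mul]; exact hbd' x hx)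
end

section
/- Let x_n be a time-homogeneous Markov chain on a compact metric measure space M with transition density p(x,y) bounded below by m₀ > 0 with respect to a reference measure, and let h : M × M → ℝ be uniformly continuous. Define S_n = Σ_{j=1}^n h(x_{j−1}, x_j) and B_n = sup over paths of Σ h(x_{j−1},x_j). If a < B := lim B_n/n, then for every n there exist δ > 0 and a realization such that P(S_n ≥ a·n) ≥ μ(B(x₀,δ)) · m₀^n · vol(B_δ)^n > 0; in particular P(S_n ≥ an) > 0 for all n, so the rate function value −lim (1/n) log P(S_n ≥ an) is finite. -/
open MeasureTheory Set

/-- Uniform lower bound on measures of `δ`-balls on a compact space. -/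
lemma exists_uniform_ball_bound {M : Type*} [MetricSpace M] [CompactSpace M] [Nonempty M]
    [MeasurableSpace M] [BorelSpace M] (vol : Measure M) [vol.IsOpenPosMeasure]
    {δ : ℝ} (hδ : 0 < δ) :
    ∃ v : ENNReal, 0 < v ∧ ∀ x : M, v ≤ vol (Metric.ball x δ) := by
  obtain ⟨s, hs⟩ := (isCompact_univ (X := M)).elim_finite_subcover
      (fun c : M => Metric.ball c (δ / 2)) (fun c => Metric.isOpen_ball)
      (fun x _ => mem_iUnion.2 ⟨x, Metric.mem_ball_self (by linarith)⟩)
  have hsne : s.Nonempty := by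
    rcases ‹Nonempty M› with ⟨x⟩
    have := hs (mem_univ x)
    simp only [mem_iUnion] at this
    obtain ⟨c, hc, _⟩ := this
    exact ⟨c, hc⟩
  refine ⟨s.inf' hsne (fun c => vol (Metric.ball c (δ / 2))), ?_, ?_⟩
  · rw [Finset.lt_inf'_iff]
    exact fun c _ => Metric.measure_ball_pos vol c (by linarith)
  · intro x
    have := hs (mem_univ x)
    simp only [mem_iUnion] at this
    obtain ⟨c, hc, hxc⟩ := this
    refine le_trans (Finset.inf'_le _ hc) (measure_mono ?_)
    intro y hy
    rw [Metric.mem_ball] at *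
    calc dist y x ≤ dist y c + dist c x := dist_triangle _ _ _
      _ < δ / 2 + δ / 2 := by
          rw [dist_comm c x]; exact add_lt_add hy hxc
      _ = δ := by ring

/-- for a Markov chain on a compact metric measure space with
transition density `p ≥ m₀ > 0` (w.r.t. a reference measure `vol` of full
support), initial distribution `μ` of full support, and uniformly continuous
`h`, if `a < B_n / n` for all `n` (i.e. `a < B = lim B_n / n`), then for every
`n ≥ 1` the probability of the path event `{S_n ≥ a n}` under the path measure
is bounded below by `μ(B(x₀,δ)) · m₀ⁿ · vol(B_δ)ⁿ > 0`; in particular it is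
positive, so the large-deviation rate is finite. -/
theorem stmt12 {M : Type*} [MetricSpace M] [CompactSpace M] [Nonempty M]
    [MeasurableSpace M] [BorelSpace M]
    (vol : Measure M) [IsFiniteMeasure vol] [vol.IsOpenPosMeasure]
    (μ : Measure M) [IsProbabilityMeasure μ] [μ.IsOpenPosMeasure]
    (p : M → M → ℝ) (hpcont : Continuous fun q : M × M => p q.1 q.2)
    (m₀ : ℝ) (hm₀ : 0 < m₀) (hplb : ∀ x y : M, m₀ ≤ p x y)
    (h : M → M → ℝ) (hucont : UniformContinuous fun q : M × M => h q.1 q.2)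
    (a : ℝ)
    (ha : ∀ n : ℕ, 0 < n →
      a < (sSup {t : ℝ | ∃ x : Fin (n + 1) → M,
          t = ∑ j : Fin n, h (x j.castSucc) (x j.succ)}) / n) :
    ∀ n : ℕ, 0 < n →
      ∃ δ > (0 : ℝ), ∃ x₀ : M, ∃ v : ENNReal, 0 < v ∧
        (∀ x : M, v ≤ vol (Metric.ball x δ)) ∧
        μ (Metric.ball x₀ δ) * (ENNReal.ofReal m₀) ^ n * v ^ n ≤
          ((μ.prod (Measure.pi fun _ : Fin n => vol)).withDensity fun y =>
              ENNReal.ofReal (∏ j : Fin n,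
                p (Matrix.vecCons y.1 y.2 j.castSucc) (Matrix.vecCons y.1 y.2 j.succ)))
            {y : M × (Fin n → M) |
              a * n ≤ ∑ j : Fin n,
                h (Matrix.vecCons y.1 y.2 j.castSucc) (Matrix.vecCons y.1 y.2 j.succ)} ∧
        0 < ((μ.prod (Measure.pi fun _ : Fin n => vol)).withDensity fun y =>
              ENNReal.ofReal (∏ j : Fin n,
                p (Matrix.vecCons y.1 y.2 j.castSucc) (Matrix.vecCons y.1 y.2 j.succ)))
            {y : M × (Fin n → M) |
              a * n ≤ ∑ j : Fin n,
                h (Matrix.vecCons y.1 y.2 j.castSucc) (Matrix.vecCons y.1 y.2 j.succ)} := by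
  intro n hn
  have hn' : (0 : ℝ) < n := by exact_mod_cast hn
  -- the Birkhoff sum set is nonempty
  set Bset : Set ℝ := {t : ℝ | ∃ x : Fin (n + 1) → M,
      t = ∑ j : Fin n, h (x j.castSucc) (x j.succ)} with hBset
  have hone : a * n < sSup Bset := by
    have := ha n hn
    rw [lt_div_iff₀ hn'] at this
    exact this
  -- find a path with sum > a*n
  obtain ⟨t, ⟨x, hx⟩, hta⟩ := exists_lt_of_lt_csSup
      (⟨_, ⟨fun _ => Classical.arbitrary M, rfl⟩⟩ : Bset.Nonempty) hone
  -- ε from uniform continuity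
  set ε : ℝ := (t - a * n) / n with hε
  have hεpos : 0 < ε := div_pos (by linarith) hn'
  obtain ⟨δ, hδ, hδh⟩ := Metric.uniformContinuous_iff.1 hucont ε hεpos
  obtain ⟨v, hv, hvol⟩ := exists_uniform_ball_bound vol hδ
  refine ⟨δ, hδ, x 0, v, hv, hvol, ?_⟩
  set ν := μ.prod (Measure.pi fun _ : Fin n => vol) with hν
  set f : M × (Fin n → M) → ENNReal := fun y =>
      ENNReal.ofReal (∏ j : Fin n,
        p (Matrix.vecCons y.1 y.2 j.castSucc) (Matrix.vecCons y.1 y.2 j.succ)) with hf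
  set E : Set (M × (Fin n → M)) := {y : M × (Fin n → M) |
      a * n ≤ ∑ j : Fin n,
        h (Matrix.vecCons y.1 y.2 j.castSucc) (Matrix.vecCons y.1 y.2 j.succ)} with hE
  set Q : Set (M × (Fin n → M)) :=
      (Metric.ball (x 0) δ) ×ˢ (univ.pi fun j : Fin n => Metric.ball (x j.succ) δ) with hQ
  have hQmeas : MeasurableSet Q :=
    (Metric.isOpen_ball.measurableSet).prod
      (MeasurableSet.univ_pi fun j => Metric.isOpen_ball.measurableSet)
  -- key: Q ⊆ E
  have hQE : Q ⊆ E := by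
    rintro ⟨y₀, yv⟩ ⟨hy₀, hyv⟩
    have hclose : ∀ k : Fin (n + 1), dist (Matrix.vecCons y₀ yv k) (x k) < δ := by
      intro k
      refine Fin.cases ?_ (fun i => ?_) k
      · simpa using hy₀
      · have := hyv i (mem_univ i)
        simpa using this
    have hsum : ∀ j : Fin n,
        h (x j.castSucc) (x j.succ) - ε <
          h (Matrix.vecCons y₀ yv j.castSucc) (Matrix.vecCons y₀ yv j.succ) := by
      intro j
      have hd : dist ((Matrix.vecCons y₀ yv j.castSucc, Matrix.vecCons y₀ yv j.succ) : M × M)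
          (x j.castSucc, x j.succ) < δ := by
        rw [Prod.dist_eq]
        refine max_lt ?_ ?_
        · exact hclose j.castSucc
        · exact hclose j.succ
      have := hδh hd
      rw [Real.dist_eq, abs_lt] at this
      linarith [this.1]
    simp only [hE, mem_setOf_eq]
    have : ∑ j : Fin n, (h (x j.castSucc) (x j.succ) - ε) ≤
        ∑ j : Fin n, h (Matrix.vecCons y₀ yv j.castSucc) (Matrix.vecCons y₀ yv j.succ) :=
      Finset.sum_le_sum fun j _ => le_of_lt (hsum j)
    have heq : ∑ j : Fin n, (h (x j.castSucc) (x j.succ) - ε) = t - n * ε := by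
      rw [Finset.sum_sub_distrib, Finset.sum_const, Finset.card_univ, Fintype.card_fin, ← hx,
        nsmul_eq_mul]
    have htne : t - n * ε = a * n := by
      rw [hε]
      field_simp
      ring
    calc a * n = t - n * ε := htne.symm
      _ = ∑ j : Fin n, (h (x j.castSucc) (x j.succ) - ε) := heq.symm
      _ ≤ _ := this
  -- lower bound on the density on Q
  have hflb : ∀ y ∈ Q, (ENNReal.ofReal m₀) ^ n ≤ f y := by
    intro y _
    rw [hf]
    rw [← ENNReal.ofReal_pow hm₀.le]
    apply ENNReal.ofReal_le_ofReal
    calc m₀ ^ n = ∏ _j : Fin n, m₀ := by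
          rw [Finset.prod_const, Finset.card_univ, Fintype.card_fin]
      _ ≤ _ := Finset.prod_le_prod (fun _ _ => hm₀.le) (fun j _ => hplb _ _)
  -- measure computation
  have hνQ : ν Q = μ (Metric.ball (x 0) δ) * ∏ j : Fin n, vol (Metric.ball (x j.succ) δ) := by
    rw [hQ, hν, Measure.prod_prod, Measure.pi_pi]
  have hmain : μ (Metric.ball (x 0) δ) * (ENNReal.ofReal m₀) ^ n * v ^ n ≤
      (ν.withDensity f) E := by
    calc μ (Metric.ball (x 0) δ) * (ENNReal.ofReal m₀) ^ n * v ^ n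
        ≤ μ (Metric.ball (x 0) δ) * (ENNReal.ofReal m₀) ^ n *
            ∏ j : Fin n, vol (Metric.ball (x j.succ) δ) := by
          apply mul_le_mul_right
          calc v ^ n = ∏ _j : Fin n, v := by
                rw [Finset.prod_const, Finset.card_univ, Fintype.card_fin]
            _ ≤ _ := Finset.prod_le_prod' fun j _ => hvol _
      _ = (ENNReal.ofReal m₀) ^ n * ν Q := by rw [hνQ]; ring
      _ = ∫⁻ y in Q, (ENNReal.ofReal m₀) ^ n ∂ν := (setLIntegral_const _ _).symm
      _ ≤ ∫⁻ y in Q, f y ∂ν := setLIntegral_mono' hQmeas hflb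
      _ = (ν.withDensity f) Q := (withDensity_apply f hQmeas).symm
      _ ≤ (ν.withDensity f) E := measure_mono hQE
  refine ⟨hmain, lt_of_lt_of_le ?_ hmain⟩
  have h1 : 0 < μ (Metric.ball (x 0) δ) := Metric.measure_ball_pos μ _ hδ
  have h2 : (0 : ENNReal) < (ENNReal.ofReal m₀) ^ n :=
    ENNReal.pow_pos (ENNReal.ofReal_pos.2 hm₀) n
  have h3 : (0 : ENNReal) < v ^ n := ENNReal.pow_pos hv n
  exact ENNReal.mul_pos (ENNReal.mul_pos h1.ne' h2.ne').ne' h3.ne'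
end

section
/- Suppose operators satisfy ‖ℒⁿ_{θ+is}‖ ≤ λ(θ)ⁿ/n^{r₂} for all n > N₀ and all K ≤ |s| ≤ n^{r₁}, with λ(θ) > 0. Then for every ε ∈ (0, r₁) and every target exponent R > 0, there exist an N₁ and constants such that ‖ℒⁿ_{θ+is}‖ ≤ λ(θ)ⁿ/n^{R} for all sufficiently large n and all K ≤ |s| ≤ n^{r₁−ε}. That is, by slightly reducing the range exponent r₁, the polynomial decay rate r₂ can be boosted to be arbitrarily large. -/
set_option maxHeartbeats 1000000

open Filter Real

/-- if `‖L(s)ⁿ‖ ≤ λ(θ)ⁿ / n^{r₂}` for all `n > N₀` and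
`K ≤ |s| ≤ n^{r₁}`, then for every `ε ∈ (0, r₁)` and every target exponent
`R > 0` there is `N₁` such that `‖L(s)ⁿ‖ ≤ λ(θ)ⁿ / n^R` for all `n ≥ N₁` and
`K ≤ |s| ≤ n^{r₁ - ε}`: slightly shrinking the range boosts the polynomial
decay arbitrarily. -/
theorem stmt17 {A : Type*} [NormedRing A] [NormOneClass A]
    (L : ℝ → A) (lamθ K r₁ r₂ : ℝ) (N₀ : ℕ)
    (hlam : 0 < lamθ) (hK : 1 ≤ K) (hr₁ : 0 < r₁) (hr₂ : 0 < r₂)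
    (hyp : ∀ n : ℕ, N₀ < n → ∀ s : ℝ, K ≤ |s| → |s| ≤ (n : ℝ) ^ r₁ →
      ‖L s ^ n‖ ≤ lamθ ^ n / (n : ℝ) ^ r₂) :
    ∀ ε : ℝ, 0 < ε → ε < r₁ → ∀ R : ℝ, 0 < R →
      ∃ N₁ : ℕ, ∀ n : ℕ, N₁ ≤ n → ∀ s : ℝ, K ≤ |s| → |s| ≤ (n : ℝ) ^ (r₁ - ε) →
        ‖L s ^ n‖ ≤ lamθ ^ n / (n : ℝ) ^ R := by
  intro ε hε hεr R hR
  set δ : ℝ := (r₁ - ε) / r₁ with hδdef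
  have hδ0 : 0 < δ := div_pos (by linarith) hr₁
  have hδ1 : δ < 1 := (div_lt_one hr₁).2 (by linarith)
  have hδr : δ * r₁ = r₁ - ε := by
    rw [hδdef, div_mul_cancel₀ _ hr₁.ne']
  obtain ⟨C, hC⟩ := exists_nat_gt (R / (r₂ * δ))
  have hCR : R ≤ r₂ * δ * C := by
    have h := (div_lt_iff₀ (by positivity : (0:ℝ) < r₂ * δ)).1 hC
    nlinarith
  -- eventual conditions, transported along the cast ℕ → ℝ
  have h1 : ∀ᶠ x : ℝ in atTop, (N₀ : ℝ) < x ^ δ :=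
    (tendsto_rpow_atTop hδ0).eventually_gt_atTop _
  have h2 : ∀ᶠ x : ℝ in atTop, (2 * (C + 1) : ℝ) ≤ x ^ (1 - δ) :=
    (tendsto_rpow_atTop (by linarith)).eventually_ge_atTop _
  have h3 : ∀ᶠ x : ℝ in atTop, (1 : ℝ) ≤ x := eventually_ge_atTop 1
  have hev : ∀ᶠ n : ℕ in atTop,
      (N₀ : ℝ) < (n : ℝ) ^ δ ∧ (2 * (C + 1) : ℝ) ≤ (n : ℝ) ^ (1 - δ) ∧ (1 : ℝ) ≤ (n : ℝ) :=
    tendsto_natCast_atTop_atTop.eventually ((h1.and (h2.and h3)))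
  obtain ⟨N₁, hN₁⟩ := eventually_atTop.1 hev
  refine ⟨N₁, fun n hn s hs1 hs2 => ?_⟩
  obtain ⟨hn1, hn2, hn3⟩ := hN₁ n hn
  have hnpos : (0:ℝ) < (n:ℝ) := by linarith
  set m : ℕ := ⌈(n : ℝ) ^ δ⌉₊ with hmdef
  have hmlb : (n : ℝ) ^ δ ≤ m := Nat.le_ceil _
  have hnδ1 : (1:ℝ) ≤ (n:ℝ) ^ δ := one_le_rpow hn3 hδ0.le
  have hm1 : (1:ℝ) ≤ (m:ℝ) := le_trans hnδ1 hmlb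
  have hmpos : 0 < m := by exact_mod_cast lt_of_lt_of_le zero_lt_one hm1
  have hmN₀ : N₀ < m := by exact_mod_cast lt_of_lt_of_le hn1 hmlb
  have hmub : (m : ℝ) ≤ (n : ℝ) ^ δ + 1 :=
    (Nat.ceil_lt_add_one (rpow_nonneg hnpos.le δ)).le
  set k : ℕ := n / m with hkdef
  set j : ℕ := n % m with hjdef
  -- k ≥ C + 1
  have hkC : C + 1 ≤ k := by
    rw [hkdef, Nat.le_div_iff_mul_le hmpos]
    have : ((C + 1) * m : ℝ) ≤ (n : ℝ) := by
      calc ((C + 1) * m : ℝ) ≤ (C + 1) * ((n:ℝ) ^ δ + 1) := by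
            have h0 : (0:ℝ) ≤ (C:ℝ) + 1 := by positivity
            push_cast
            exact mul_le_mul_of_nonneg_left hmub h0
        _ ≤ (C + 1) * (2 * (n:ℝ) ^ δ) := by
            have h0 : (0:ℝ) ≤ (C:ℝ) + 1 := by positivity
            push_cast; nlinarith [hnδ1]
        _ = (2 * (C+1)) * (n:ℝ) ^ δ := by push_cast; ring
        _ ≤ (n:ℝ) ^ (1 - δ) * (n:ℝ) ^ δ := by gcongr
        _ = (n:ℝ) := by rw [← Real.rpow_add hnpos]; simp
    exact_mod_cast this
  obtain ⟨k', hk'⟩ : ∃ k', k = k' + 1 := ⟨k - 1, by omega⟩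
  have hdecomp : n = m * k' + (m + j) := by
    have h := Nat.div_add_mod n m
    rw [← hkdef, ← hjdef, hk'] at h
    have : m * (k' + 1) = m * k' + m := by ring
    omega
  -- |s| ≤ m ^ r₁
  have hsm : |s| ≤ (m : ℝ) ^ r₁ := by
    calc |s| ≤ (n : ℝ) ^ (r₁ - ε) := hs2
      _ = ((n:ℝ) ^ δ) ^ r₁ := by rw [← Real.rpow_mul hnpos.le, hδr]
      _ ≤ (m : ℝ) ^ r₁ := Real.rpow_le_rpow (by positivity) hmlb hr₁.le
  have hsm2 : ∀ b : ℕ, m ≤ b → |s| ≤ (b : ℝ) ^ r₁ := by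
    intro b hb
    refine hsm.trans (Real.rpow_le_rpow (by positivity) ?_ hr₁.le)
    exact_mod_cast hb
  -- bounds on the blocks
  have hLm : ‖L s ^ m‖ ≤ lamθ ^ m / (m : ℝ) ^ r₂ := hyp m hmN₀ s hs1 (hsm2 m le_rfl)
  have hLmj : ‖L s ^ (m + j)‖ ≤ lamθ ^ (m + j) / (m : ℝ) ^ r₂ := by
    refine (hyp (m + j) (by omega) s hs1 (hsm2 (m + j) (by omega))).trans ?_
    have hb : ((m:ℝ)) ^ r₂ ≤ ((m + j : ℕ) : ℝ) ^ r₂ := by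
      refine Real.rpow_le_rpow (by positivity) ?_ hr₂.le
      exact_mod_cast Nat.le_add_right m j
    exact div_le_div_of_nonneg_left (by positivity) (by positivity) hb
  have hX : (0:ℝ) < (m:ℝ) ^ r₂ := by positivity
  have hnormm : (0:ℝ) ≤ lamθ ^ m / (m:ℝ) ^ r₂ := by positivity
  -- the target bound on the accumulated decay
  have hacc : (n : ℝ) ^ R ≤ ((m : ℝ) ^ r₂) ^ k := by
    have h1' : ((m : ℝ) ^ r₂) ^ k = (m : ℝ) ^ (r₂ * k) := by
      rw [← Real.rpow_natCast ((m:ℝ) ^ r₂) k, ← Real.rpow_mul (by positivity)]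
    rw [h1']
    calc (n : ℝ) ^ R ≤ (n : ℝ) ^ (δ * (r₂ * k)) := by
          apply Real.rpow_le_rpow_of_exponent_le hn3
          have hk1 : (C : ℝ) ≤ (k : ℝ) := by exact_mod_cast (by omega : C ≤ k)
          have h0 : (0:ℝ) ≤ r₂ * δ := by positivity
          have := mul_le_mul_of_nonneg_left hk1 h0
          linarith
      _ = ((n : ℝ) ^ δ) ^ (r₂ * k) := by rw [← Real.rpow_mul hnpos.le]
      _ ≤ (m : ℝ) ^ (r₂ * k) := by
          refine Real.rpow_le_rpow (by positivity) hmlb (by positivity)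
  -- the main chain
  calc ‖L s ^ n‖ = ‖L s ^ (m * k') * L s ^ (m + j)‖ := by rw [← pow_add, ← hdecomp]
    _ ≤ ‖L s ^ (m * k')‖ * ‖L s ^ (m + j)‖ := norm_mul_le _ _
    _ ≤ ‖L s ^ m‖ ^ k' * ‖L s ^ (m + j)‖ := by
        gcongr
        rw [pow_mul]
        exact norm_pow_le _ _
    _ ≤ (lamθ ^ m / (m:ℝ) ^ r₂) ^ k' * (lamθ ^ (m + j) / (m:ℝ) ^ r₂) := by
        gcongr
    _ = lamθ ^ n / ((m:ℝ) ^ r₂) ^ k := by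
        rw [div_pow, div_mul_div_comm, ← pow_mul, ← pow_add, ← hdecomp, hk', pow_succ]
    _ ≤ lamθ ^ n / (n : ℝ) ^ R := by
        gcongr
end
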